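/- Let λ* ≥ 0 satisfy J(λ*) ≤ J(μ) for every μ ≥ 0 (i.e., λ* is a minimizer of the Lagrangian dual). Then for every λ > λ*, every nonempty subset S ⊆ V that maximizes H_λ over all nonempty subsets satisfies c(S) ≥ θ. -/
import Mathlib


/-- The number of edges of `G` with both endpoints in `S`, divided by `|S|`. -/
noncomputable def density {V : Type*} (G : SimpleGraph V) (S : Finset V) : ℝ :=
  ({e ∈ G.edgeSet | ∀ v ∈ e, v ∈ S} : Set (Sym2 V)).ncard / S.card

/-- The average agreement value over `S`. -/
noncomputable def agreement {V : Type*} (c : V → ℝ) (S : Finset V) : ℝ :=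
  (∑ v ∈ S, c v) / S.card

/-- The Lagrangian objective `H_λ(S) = d(S) + λ (c(S) - θ)`. -/
noncomputable def Hval {V : Type*} (G : SimpleGraph V) (c : V → ℝ) (θ l : ℝ)
    (S : Finset V) : ℝ :=
  density G S + l * (agreement c S - θ)

/-- If `λ*` minimizes the Lagrangian dual `J` over `[0, ∞)`, then for every `λ > λ*` every
nonempty maximizer of `H_λ` is feasible for Q-DISCO. -/
theorem feasible_above_dual_minimizer {V : Type*} [Fintype V] [Nonempty V]
    (G : SimpleGraph V) (c : V → ℝ) (θ : ℝ) (J : ℝ → ℝ)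
    (hJ : ∀ l : ℝ,
      IsGreatest {x : ℝ | ∃ S : Finset V, S.Nonempty ∧ x = Hval G c θ l S} (J l))
    (lstar : ℝ) (hlstar : 0 ≤ lstar) (hmin : ∀ μ : ℝ, 0 ≤ μ → J lstar ≤ J μ)
    (l : ℝ) (hl : lstar < l)
    (S : Finset V) (hS : S.Nonempty)
    (hopt : ∀ T : Finset V, T.Nonempty → Hval G c θ l T ≤ Hval G c θ l S) :
    θ ≤ agreement c S := by
  by_contra h
  push_neg at h
  -- J l = Hval G c θ l S
  have hJl : J l = Hval G c θ l S := by
    obtain ⟨⟨T, hT, hTeq⟩, hub⟩ := hJ l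
    have h1 : J l ≤ Hval G c θ l S := hTeq ▸ hopt T hT
    have h2 : Hval G c θ l S ≤ J l := hub ⟨S, hS, rfl⟩
    linarith
  have hstar : Hval G c θ lstar S ≤ J lstar := (hJ lstar).2 ⟨S, hS, rfl⟩
  have hmin' : J lstar ≤ J l := hmin l (le_of_lt (lt_of_le_of_lt hlstar hl))
  have key : Hval G c θ l S < Hval G c θ lstar S := by
    unfold Hval
    have : (l - lstar) * (agreement c S - θ) < 0 :=
      mul_neg_of_pos_of_neg (by linarith) (by linarith)
    nlinarith
  linarith
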